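/- For the branching from G₂ to SU(3): for a dominant weight λ = n₁ϖ₁ + n₂ϖ₂ of G₂ with n₁ sufficiently large, and a dominant weight μ = m₁ω₁ + m₂ω₂ of SU(3), the branching multiplicity equals min{m₁+1, m₂+1, m₁+m₂−n₂+1, n₂+1} (interpreted as 0 when this minimum is non-positive). In particular, for μ on either one-dimensional face (m₁ = 0 or m₂ = 0) the multiplicity is at most 1. -/

import Mathlib

/-- Kostant partition function for the multiset `A = {ε₁, ε₂, ε₃}` of short positive roots
of `G₂`, realized in the sum-zero sublattice of `ℤ³` as `ε₁ = (1,0,-1)`, `ε₂ = (1,-1,0)`,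
`ε₃ = (0,1,-1)` (so `ε₁ = ε₂ + ε₃`): the number of ways to write `v` as an `ℕ`-linear
combination `a·ε₁ + b·ε₂ + c·ε₃`. -/
noncomputable def g2PartitionA (v : Fin 3 → ℤ) : ℕ :=
  {t : ℕ × ℕ × ℕ |
    (t.1 : ℤ) + t.2.1 = v 0 ∧ -(t.2.1 : ℤ) + t.2.2 = v 1 ∧ -(t.1 : ℤ) - t.2.2 = v 2}.ncard

/-- Branching multiplicity for `G₂ ⊃ SU(3)` via the Kostant/Heckman branching formula
`m_λ(μ) = Σ_{w ∈ W(G₂)} det(w) · p_A(w(λ+ρ) - ρ - μ)`.  Here `W(G₂) = {±σ : σ ∈ S₃}` acts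
on the sum-zero sublattice of `ℤ³` (with `det(±σ) = sgn(σ)` on the 2-dimensional reflection
representation), `ρ = ρ_{G₂} = (3,-1,-2)`, `λ = n₁ϖ₁ + n₂ϖ₂` with `ϖ₁ = (1,0,-1)`,
`ϖ₂ = (2,-1,-1)`, and `μ = m₁ω₁ + m₂ω₂` with `ω₁ = (1,0,-1)`, `ω₂ = (1,-1,0)`. -/
noncomputable def g2su3Mult (n₁ n₂ m₁ m₂ : ℕ) : ℤ :=
  ∑ σ : Equiv.Perm (Fin 3), ∑ s : Bool,
    (Equiv.Perm.sign σ : ℤ) *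
      g2PartitionA (fun i =>
        (if s then (-1 : ℤ) else 1) *
            ((n₁ : ℤ) * ![(1 : ℤ), 0, -1] (σ⁻¹ i) + (n₂ : ℤ) * ![(2 : ℤ), -1, -1] (σ⁻¹ i)
              + ![(3 : ℤ), -1, -2] (σ⁻¹ i))
          - ![(3 : ℤ), -1, -2] i
          - ((m₁ : ℤ) * ![(1 : ℤ), 0, -1] i + (m₂ : ℤ) * ![(1 : ℤ), -1, 0] i))

lemma pA_eq (v : Fin 3 → ℤ) :
    g2PartitionA v =
      if v 0 + v 1 + v 2 = 0 then (min (v 0) (v 0 + v 1) + 1).toNat else 0 := by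
  unfold g2PartitionA
  by_cases h : v 0 + v 1 + v 2 = 0
  · rw [if_pos h]
    set L : ℕ := (-(v 1)).toNat with hL
    set N : ℕ := (min (v 0) (v 0 + v 1) + 1).toNat with hN
    have hset : {t : ℕ × ℕ × ℕ |
        (t.1 : ℤ) + t.2.1 = v 0 ∧ -(t.2.1 : ℤ) + t.2.2 = v 1 ∧ -(t.1 : ℤ) - t.2.2 = v 2} =
        ↑((Finset.range N).image fun k =>
          (((v 0 - (L + k : ℕ)).toNat, L + k, (v 1 + (L + k : ℕ)).toNat) : ℕ × ℕ × ℕ)) := by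
      ext ⟨a, b, c⟩
      simp only [Set.mem_setOf_eq, Finset.coe_image, Set.mem_image, Finset.mem_coe,
        Finset.mem_range, Prod.mk.injEq]
      constructor
      · rintro ⟨h1, h2, h3⟩
        exact ⟨b - L, by omega, by omega, by omega, by omega⟩
      · rintro ⟨k, hk, rfl, rfl, rfl⟩
        refine ⟨by omega, by omega, by omega⟩
    rw [hset, Set.ncard_coe_finset, Finset.card_image_of_injective, Finset.card_range]
    intro k1 k2 hk
    simpa using congrArg (fun t => t.2.1) hk
  · rw [if_neg h]
    have hset : {t : ℕ × ℕ × ℕ |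
        (t.1 : ℤ) + t.2.1 = v 0 ∧ -(t.2.1 : ℤ) + t.2.2 = v 1 ∧ -(t.1 : ℤ) - t.2.2 = v 2} = ∅ := by
      ext ⟨a, b, c⟩
      simp only [Set.mem_setOf_eq, Set.mem_empty_iff_false, iff_false]
      rintro ⟨h1, h2, h3⟩
      omega
    rw [hset, Set.ncard_empty]

set_option maxHeartbeats 1000000 in
lemma g2su3Mult_key (n₁ n₂ m₁ m₂ : ℕ) (hlarge : (n₂ : ℤ) + m₁ + m₂ ≤ n₁) :
    g2su3Mult n₁ n₂ m₁ m₂ =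
      max 0 (min (min ((m₁ : ℤ) + 1) ((m₂ : ℤ) + 1))
        (min ((m₁ : ℤ) + m₂ - n₂ + 1) ((n₂ : ℤ) + 1))) := by
  have huniv : (Finset.univ : Finset (Equiv.Perm (Fin 3))) =
      {1, Equiv.swap 0 1, Equiv.swap 0 2, Equiv.swap 1 2,
       Equiv.swap 0 1 * Equiv.swap 0 2, Equiv.swap 0 2 * Equiv.swap 0 1} := by decide
  unfold g2su3Mult
  rw [huniv]
  rw [Finset.sum_insert (by decide), Finset.sum_insert (by decide),
    Finset.sum_insert (by decide), Finset.sum_insert (by decide),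
    Finset.sum_insert (by decide), Finset.sum_singleton]
  simp only [Fintype.sum_bool, pA_eq]
  simp only [Equiv.Perm.sign_one, Equiv.Perm.sign_swap (by decide : (0:Fin 3) ≠ 1),
    Equiv.Perm.sign_swap (by decide : (0:Fin 3) ≠ 2), Equiv.Perm.sign_swap (by decide : (1:Fin 3) ≠ 2),
    map_mul, Equiv.swap_inv, mul_inv_rev, inv_one, Equiv.Perm.mul_apply, Equiv.Perm.one_apply,
    Equiv.swap_apply_left, Equiv.swap_apply_right,
    Equiv.swap_apply_of_ne_of_ne (by decide : (2:Fin 3) ≠ 0) (by decide : (2:Fin 3) ≠ 1),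
    Equiv.swap_apply_of_ne_of_ne (by decide : (1:Fin 3) ≠ 0) (by decide : (1:Fin 3) ≠ 2),
    Equiv.swap_apply_of_ne_of_ne (by decide : (0:Fin 3) ≠ 1) (by decide : (0:Fin 3) ≠ 2),
    Matrix.cons_val_zero, Matrix.cons_val_one, Matrix.head_cons, Matrix.cons_val_two,
    Matrix.tail_cons, if_true, if_false, Bool.false_eq_true, Units.val_one, Units.val_neg,
    one_mul, neg_mul, mul_one, neg_neg]
  ring_nf
  simp only [if_true]
  rw [show ((1 + min (-6 - (n₁:ℤ) - (n₂:ℤ) * 2 - (m₁:ℤ) - (m₂:ℤ)) (-4 - (n₁:ℤ) - (n₂:ℤ) - (m₁:ℤ))).toNat : ℤ) = 0 from by omega,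
    show ((1 + min (-2 + (n₂:ℤ) - (m₁:ℤ) - (m₂:ℤ)) (-4 - (n₁:ℤ) - (n₂:ℤ) - (m₁:ℤ))).toNat : ℤ) = 0 from by omega,
    show ((1 + min (-4 - (n₂:ℤ) - (m₁:ℤ) - (m₂:ℤ)) ((n₁:ℤ) + (n₂:ℤ) - (m₁:ℤ))).toNat : ℤ) = 0 from by omega,
    show ((1 + min (-5 - (n₁:ℤ) - (n₂:ℤ) - (m₁:ℤ) - (m₂:ℤ)) (-5 - (n₁:ℤ) - (n₂:ℤ) * 2 - (m₁:ℤ))).toNat : ℤ) = 0 from by omega,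
    show ((1 + min (-6 - (n₁:ℤ) - (n₂:ℤ) * 2 - (m₁:ℤ) - (m₂:ℤ)) (-3 - (n₂:ℤ) - (m₁:ℤ))).toNat : ℤ) = 0 from by omega,
    show ((1 + min (-4 - (n₂:ℤ) - (m₁:ℤ) - (m₂:ℤ)) (-5 - (n₁:ℤ) - (n₂:ℤ) * 2 - (m₁:ℤ))).toNat : ℤ) = 0 from by omega,
    show ((1 + min (-1 + (n₁:ℤ) + (n₂:ℤ) - (m₁:ℤ) - (m₂:ℤ)) (-3 - (n₂:ℤ) - (m₁:ℤ))).toNat : ℤ) = 0 from by omega,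
    show ((1 + min (-5 - (n₁:ℤ) - (n₂:ℤ) - (m₁:ℤ) - (m₂:ℤ)) (-1 + (n₂:ℤ) - (m₁:ℤ))).toNat : ℤ) = 0 from by omega]
  omega


/-- For `λ = n₁ϖ₁ + n₂ϖ₂` with `n₁` large (`n₁ ≥ n₂ + m₁ + m₂`) and `μ = m₁ω₁ + m₂ω₂`,
the `G₂ ⊃ SU(3)` branching multiplicity equals
`min{m₁+1, m₂+1, m₁+m₂-n₂+1, n₂+1}` (interpreted as `0` when this minimum is nonpositive);
in particular it is at most `1` when `μ` lies on a one-dimensional face (`m₁ = 0` or `m₂ = 0`). -/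
theorem g2su3_branching_min_formula (n₁ n₂ m₁ m₂ : ℕ)
    (hlarge : (n₂ : ℤ) + m₁ + m₂ ≤ n₁) :
    g2su3Mult n₁ n₂ m₁ m₂ =
      max 0 (min (min ((m₁ : ℤ) + 1) ((m₂ : ℤ) + 1))
        (min ((m₁ : ℤ) + m₂ - n₂ + 1) ((n₂ : ℤ) + 1))) ∧
    ((m₁ = 0 ∨ m₂ = 0) → g2su3Mult n₁ n₂ m₁ m₂ ≤ 1) := by
  have key := g2su3Mult_key n₁ n₂ m₁ m₂ hlarge
  refine ⟨key, fun h => ?_⟩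
  rw [key]
  rcases h with h | h <;> subst h <;> omega
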